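/- arXiv:2407.21605 — 5 statements merged into one kernel-verified Lean document; each statement's English description precedes it below -/
import Mathlib

section
/- Let H be a separable complex Hilbert space with orthogonal decomposition H = H₊ ⊕ H₋ given by orthogonal projections P₊ and P₋ = 1 - P₊. If μ is a bounded operator on H such that P₊μP₊ and P₋μP₋ are trace class, and ν is any bounded operator on H such that the off-diagonal blocks P₊νP₋ and P₋νP₊ are Hilbert–Schmidt (and similarly P₊μP₋, P₋μP₊ are Hilbert–Schmidt), then the restricted trace Tr_res(A) := Tr(P₊AP₊) + Tr(P₋AP₋) satisfies Tr_res(μν) = Tr_res(νμ). -/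
open scoped InnerProductSpace

noncomputable section

/-- A bounded operator between Hilbert spaces is Hilbert–Schmidt if the sum of squared
norms of the images of some Hilbert basis converges. -/
def IsHilbertSchmidt {E F : Type*} [NormedAddCommGroup E] [InnerProductSpace ℂ E]
    [NormedAddCommGroup F] [InnerProductSpace ℂ F] (A : E →L[ℂ] F) : Prop :=
  ∃ (ι : Type) (b : HilbertBasis ι ℂ E), Summable fun i => ‖A (b i)‖ ^ 2

/-- A bounded operator is trace class if it is a product of two Hilbert–Schmidt operators. -/
def IsTraceClass {E : Type*} [NormedAddCommGroup E] [InnerProductSpace ℂ E]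
    (A : E →L[ℂ] E) : Prop :=
  ∃ B C : E →L[ℂ] E, IsHilbertSchmidt B ∧ IsHilbertSchmidt C ∧ A = B ∘L C

/-- The trace of an operator computed with respect to a Hilbert basis. -/
def traceB {H : Type*} [NormedAddCommGroup H] [InnerProductSpace ℂ H]
    {ι : Type*} (b : HilbertBasis ι ℂ H) (A : H →L[ℂ] H) : ℂ :=
  ∑' i, ⟪b i, A (b i)⟫_ℂ

/-- The restricted trace `Tr_res(A) = Tr(P₊ A P₊) + Tr(P₋ A P₋)` with `P₋ = 1 - P₊`,
computed with respect to a Hilbert basis. -/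
def trRes {H : Type*} [NormedAddCommGroup H] [InnerProductSpace ℂ H]
    {ι : Type*} (b : HilbertBasis ι ℂ H) (P : H →L[ℂ] H) (A : H →L[ℂ] H) : ℂ :=
  traceB b (P * A * P) + traceB b ((1 - P) * A * (1 - P))

set_option linter.unusedSectionVars false

open scoped ENNReal NNReal

section Helpers

variable {H : Type*} [NormedAddCommGroup H] [InnerProductSpace ℂ H] [CompleteSpace H]

lemma summable_nnnorm_sq_iff {α E : Type*} [NormedAddCommGroup E] {g : α → E} :
    Summable (fun a => ‖g a‖ ^ 2) ↔ (∑' a, (‖g a‖₊ : ℝ≥0∞) ^ 2) ≠ ⊤ := by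
  have h1 : (fun a => ‖g a‖ ^ 2) = fun a => ((‖g a‖₊ ^ 2 : ℝ≥0) : ℝ) := by
    funext a; push_cast; rfl
  have h2 : ∀ a, ((‖g a‖₊ ^ 2 : ℝ≥0) : ℝ≥0∞) = (‖g a‖₊ : ℝ≥0∞) ^ 2 := by
    intro a; push_cast; rfl
  rw [h1, NNReal.summable_coe, ← ENNReal.tsum_coe_ne_top_iff_summable]
  simp_rw [h2]

lemma parseval_hasSum {ι : Type*} (b : HilbertBasis ι ℂ H) (x : H) :
    HasSum (fun i => ‖⟪b i, x⟫_ℂ‖ ^ 2) (‖x‖ ^ 2) := by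
  have h := (b.hasSum_inner_mul_inner x x).mapL Complex.reCLM
  have hx : Complex.reCLM ⟪x, x⟫_ℂ = ‖x‖ ^ 2 := by
    simpa using inner_self_eq_norm_sq (𝕜 := ℂ) x
  rw [hx] at h
  convert h using 2 with i
  have e1 : ⟪x, b i⟫_ℂ = (starRingEnd ℂ) ⟪b i, x⟫_ℂ := (inner_conj_symm _ _).symm
  rw [e1, RCLike.conj_mul]
  norm_cast

lemma parsevalE {ι : Type*} (b : HilbertBasis ι ℂ H) (x : H) :
    ∑' i, (‖⟪b i, x⟫_ℂ‖₊ : ℝ≥0∞) ^ 2 = (‖x‖₊ : ℝ≥0∞) ^ 2 := by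
  have h := parseval_hasSum b x
  have h2 : ∑' i, ENNReal.ofReal (‖⟪b i, x⟫_ℂ‖ ^ 2) = ENNReal.ofReal (‖x‖ ^ 2) := by
    rw [← ENNReal.ofReal_tsum_of_nonneg (fun i => sq_nonneg _) h.summable, h.tsum_eq]
  simp_rw [ENNReal.ofReal_pow (norm_nonneg _), ofReal_norm, enorm_eq_nnnorm] at h2
  exact h2

/-- The ENNReal-valued Hilbert–Schmidt norm squared w.r.t. a basis. -/
def SE (A : H →L[ℂ] H) {ι : Type*} (b : HilbertBasis ι ℂ H) : ℝ≥0∞ :=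
  ∑' i, (‖A (b i)‖₊ : ℝ≥0∞) ^ 2

lemma SE_adjoint {ι κ : Type*} (b : HilbertBasis ι ℂ H) (c : HilbertBasis κ ℂ H)
    (A : H →L[ℂ] H) : SE A b = SE (ContinuousLinearMap.adjoint A) c := by
  unfold SE
  calc ∑' i, (‖A (b i)‖₊ : ℝ≥0∞) ^ 2
      = ∑' i, ∑' k, (‖⟪c k, A (b i)⟫_ℂ‖₊ : ℝ≥0∞) ^ 2 := by
        simp_rw [parsevalE c]
    _ = ∑' k, ∑' i, (‖⟪c k, A (b i)⟫_ℂ‖₊ : ℝ≥0∞) ^ 2 := ENNReal.tsum_comm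
    _ = ∑' k, ∑' i, (‖⟪b i, ContinuousLinearMap.adjoint A (c k)⟫_ℂ‖₊ : ℝ≥0∞) ^ 2 := by
        congr 1; funext k; congr 1; funext i
        rw [← ContinuousLinearMap.adjoint_inner_left, ← inner_conj_symm, RCLike.nnnorm_conj]
    _ = ∑' k, (‖ContinuousLinearMap.adjoint A (c k)‖₊ : ℝ≥0∞) ^ 2 := by
        simp_rw [parsevalE b]

lemma summB_iff_SE {ι : Type*} (b : HilbertBasis ι ℂ H) (A : H →L[ℂ] H) :
    (Summable fun i => ‖A (b i)‖ ^ 2) ↔ SE A b ≠ ⊤ :=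
  summable_nnnorm_sq_iff

lemma IsHilbertSchmidt.summB {A : H →L[ℂ] H} (hA : IsHilbertSchmidt A)
    {ι : Type*} (b : HilbertBasis ι ℂ H) : Summable fun i => ‖A (b i)‖ ^ 2 := by
  obtain ⟨κ, c, hc⟩ := hA
  rw [summB_iff_SE, SE_adjoint b c, ← SE_adjoint c c, ← summB_iff_SE]
  exact hc

lemma IsHilbertSchmidt.summB_adjoint {A : H →L[ℂ] H} (hA : IsHilbertSchmidt A)
    {ι : Type*} (b : HilbertBasis ι ℂ H) :
    Summable fun i => ‖ContinuousLinearMap.adjoint A (b i)‖ ^ 2 := by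
  obtain ⟨κ, c, hc⟩ := hA
  rw [summB_iff_SE, ← SE_adjoint c b, ← summB_iff_SE]
  exact hc

lemma summB_mul_left {A : H →L[ℂ] H} {ι : Type*} {b : HilbertBasis ι ℂ H}
    (hA : Summable fun i => ‖A (b i)‖ ^ 2) (B : H →L[ℂ] H) :
    Summable fun i => ‖(B * A) (b i)‖ ^ 2 := by
  refine Summable.of_nonneg_of_le (fun i => sq_nonneg _) (fun i => ?_) (hA.mul_left (‖B‖ ^ 2))
  calc ‖(B * A) (b i)‖ ^ 2 ≤ (‖B‖ * ‖A (b i)‖) ^ 2 := by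
        apply pow_le_pow_left₀ (norm_nonneg _)
        exact B.le_opNorm _
    _ = ‖B‖ ^ 2 * ‖A (b i)‖ ^ 2 := by ring

lemma IsHilbertSchmidt.summB_mul_right {A : H →L[ℂ] H} (hA : IsHilbertSchmidt A)
    (B : H →L[ℂ] H) {ι : Type*} (b : HilbertBasis ι ℂ H) :
    Summable fun i => ‖(A * B) (b i)‖ ^ 2 := by
  obtain ⟨κ, c, hc⟩ := hA
  rw [summB_iff_SE, SE_adjoint b c]
  have hadj : ContinuousLinearMap.adjoint (A * B)
      = ContinuousLinearMap.adjoint B * ContinuousLinearMap.adjoint A :=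
    ContinuousLinearMap.adjoint_comp A B
  rw [hadj, ← summB_iff_SE]
  exact summB_mul_left (IsHilbertSchmidt.summB_adjoint ⟨κ, c, hc⟩ c) _

lemma hasSum_diag {ι : Type*} (b : HilbertBasis ι ℂ H) (A B : H →L[ℂ] H)
    (hA : Summable fun i => ‖A (b i)‖ ^ 2) (hB : Summable fun i => ‖B (b i)‖ ^ 2) :
    HasSum (fun i => ⟪b i, (A * B) (b i)⟫_ℂ)
      (∑' p : ι × ι, ⟪b p.1, A (b p.2)⟫_ℂ * ⟪b p.2, B (b p.1)⟫_ℂ) := by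
  set f : ι × ι → ℂ := fun p => ⟪b p.1, A (b p.2)⟫_ℂ * ⟪b p.2, B (b p.1)⟫_ℂ with hf_def
  have h1 : Summable fun p : ι × ι => ‖⟪b p.1, A (b p.2)⟫_ℂ‖ ^ 2 := by
    rw [summable_nnnorm_sq_iff]
    have : ∑' p : ι × ι, (‖⟪b p.1, A (b p.2)⟫_ℂ‖₊ : ℝ≥0∞) ^ 2
        = ∑' j, (‖A (b j)‖₊ : ℝ≥0∞) ^ 2 := by
      rw [ENNReal.tsum_prod']
      rw [ENNReal.tsum_comm]
      simp_rw [parsevalE b]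
    rw [this]
    exact (summB_iff_SE b A).mp hA
  have h2 : Summable fun p : ι × ι => ‖⟪b p.2, B (b p.1)⟫_ℂ‖ ^ 2 := by
    rw [summable_nnnorm_sq_iff]
    have : ∑' p : ι × ι, (‖⟪b p.2, B (b p.1)⟫_ℂ‖₊ : ℝ≥0∞) ^ 2
        = ∑' i, (‖B (b i)‖₊ : ℝ≥0∞) ^ 2 := by
      rw [ENNReal.tsum_prod']
      simp_rw [parsevalE b]
    rw [this]
    exact (summB_iff_SE b B).mp hB
  have hf : Summable f := by
    apply Summable.of_norm
    refine Summable.of_nonneg_of_le (fun p => norm_nonneg _) (fun p => ?_)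
      (((h1.add h2).div_const 2))
    rw [hf_def, norm_mul]
    nlinarith [sq_nonneg (‖⟪b p.1, A (b p.2)⟫_ℂ‖ - ‖⟪b p.2, B (b p.1)⟫_ℂ‖),
      norm_nonneg (⟪b p.1, A (b p.2)⟫_ℂ), norm_nonneg (⟪b p.2, B (b p.1)⟫_ℂ)]
  have hfib : ∀ i, HasSum (fun j => f (i, j)) ⟪b i, (A * B) (b i)⟫_ℂ := by
    intro i
    have h := b.hasSum_inner_mul_inner (ContinuousLinearMap.adjoint A (b i)) (B (b i))
    simp_rw [ContinuousLinearMap.adjoint_inner_left] at h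
    exact h
  exact hf.hasSum.prod_fiberwise hfib

lemma traceB_comm {ι : Type*} (b : HilbertBasis ι ℂ H) (A B : H →L[ℂ] H)
    (hA : Summable fun i => ‖A (b i)‖ ^ 2) (hB : Summable fun i => ‖B (b i)‖ ^ 2) :
    traceB b (A * B) = traceB b (B * A) := by
  have h1 := (hasSum_diag b A B hA hB).tsum_eq
  have h2 := (hasSum_diag b B A hB hA).tsum_eq
  unfold traceB
  rw [h1, h2]
  have h3 := Equiv.tsum_eq (Equiv.prodComm ι ι)
    (fun p : ι × ι => ⟪b p.1, A (b p.2)⟫_ℂ * ⟪b p.2, B (b p.1)⟫_ℂ)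
  rw [← h3]
  congr 1
  funext p
  simp [mul_comm]

lemma traceB_add {ι : Type*} (b : HilbertBasis ι ℂ H) (T1 T2 : H →L[ℂ] H)
    (h1 : Summable fun i => ⟪b i, T1 (b i)⟫_ℂ)
    (h2 : Summable fun i => ⟪b i, T2 (b i)⟫_ℂ) :
    traceB b (T1 + T2) = traceB b T1 + traceB b T2 := by
  unfold traceB
  simp_rw [ContinuousLinearMap.add_apply, inner_add_right]
  exact Summable.tsum_add h1 h2

end Helpers

/-- Cyclicity of the restricted trace: if `μ` has trace-class diagonal blocks and
Hilbert–Schmidt off-diagonal blocks, and `ν` is bounded with Hilbert–Schmidt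
off-diagonal blocks, then `Tr_res(μν) = Tr_res(νμ)`. -/
theorem trRes_mul_comm {H : Type*} [NormedAddCommGroup H] [InnerProductSpace ℂ H]
    [CompleteSpace H] [TopologicalSpace.SeparableSpace H]
    (P μ ν : H →L[ℂ] H) (hP_proj : P * P = P) (hP_sa : IsSelfAdjoint P)
    (hμpp : IsTraceClass (P * μ * P))
    (hμmm : IsTraceClass ((1 - P) * μ * (1 - P)))
    (hμpm : IsHilbertSchmidt (P * μ * (1 - P)))
    (hμmp : IsHilbertSchmidt ((1 - P) * μ * P))
    (hνpm : IsHilbertSchmidt (P * ν * (1 - P)))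
    (hνmp : IsHilbertSchmidt ((1 - P) * ν * P)) :
    ∀ {ι : Type*} (b : HilbertBasis ι ℂ H),
      trRes b P (μ * ν) = trRes b P (ν * μ) := by
  intro ι b
  have hQQ : (1 - P) * (1 - P) = 1 - P := by
    simp [mul_sub, sub_mul, hP_proj]
  have hPQ1 : P + (1 - P) = 1 := by abel
  have hQP1 : (1 - P) + P = 1 := by abel
  have hdecomp : ∀ (R S a c : H →L[ℂ] H), R * R = R → S * S = S → R + S = 1 →
      R * (a * c) * R = (R * a * R) * (R * c * R) + (R * a * S) * (S * c * R) := by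
    intro R S a c hR hS hRS
    symm
    calc (R * a * R) * (R * c * R) + (R * a * S) * (S * c * R)
        = R * a * (R * R) * c * R + R * a * (S * S) * c * R := by noncomm_ring
      _ = R * a * R * c * R + R * a * S * c * R := by rw [hR, hS]
      _ = R * a * (R + S) * c * R := by noncomm_ring
      _ = R * a * 1 * c * R := by rw [hRS]
      _ = R * (a * c) * R := by noncomm_ring
  have hD1 := hdecomp P (1 - P) μ ν hP_proj hQQ hPQ1
  have hD2 := hdecomp (1 - P) P μ ν hQQ hP_proj hQP1
  have hD3 := hdecomp P (1 - P) ν μ hP_proj hQQ hPQ1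
  have hD4 := hdecomp (1 - P) P ν μ hQQ hP_proj hQP1
  obtain ⟨B₁, C₁, hB₁, hC₁, hfac₁⟩ := hμpp
  obtain ⟨B₂, C₂, hB₂, hC₂, hfac₂⟩ := hμmm
  have hfac₁' : P * μ * P = B₁ * C₁ := hfac₁
  have hfac₂' : (1 - P) * μ * (1 - P) = B₂ * C₂ := hfac₂
  -- summability of square norms w.r.t. b
  have sB₁ := hB₁.summB b
  have sC₁ := hC₁.summB b
  have sB₂ := hB₂.summB b
  have sC₂ := hC₂.summB b
  have sμpm := hμpm.summB b
  have sμmp := hμmp.summB b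
  have sνpm := hνpm.summB b
  have sνmp := hνmp.summB b
  have sC₁ν : Summable fun i => ‖(C₁ * (P * ν * P)) (b i)‖ ^ 2 :=
    hC₁.summB_mul_right (P * ν * P) b
  have sνB₁ : Summable fun i => ‖((P * ν * P) * B₁) (b i)‖ ^ 2 :=
    summB_mul_left sB₁ (P * ν * P)
  have sC₂ν : Summable fun i => ‖(C₂ * ((1 - P) * ν * (1 - P))) (b i)‖ ^ 2 :=
    hC₂.summB_mul_right ((1 - P) * ν * (1 - P)) b
  have sνB₂ : Summable fun i => ‖(((1 - P) * ν * (1 - P)) * B₂) (b i)‖ ^ 2 :=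
    summB_mul_left sB₂ ((1 - P) * ν * (1 - P))
  -- diagonal summability of the eight products
  have t1 : Summable fun i => ⟪b i, ((P * μ * P) * (P * ν * P)) (b i)⟫_ℂ := by
    simp only [hfac₁', mul_assoc B₁ C₁ (P * ν * P)]
    exact (hasSum_diag b B₁ (C₁ * (P * ν * P)) sB₁ sC₁ν).summable
  have t2 : Summable fun i => ⟪b i, ((P * μ * (1 - P)) * ((1 - P) * ν * P)) (b i)⟫_ℂ :=
    (hasSum_diag b _ _ sμpm sνmp).summable
  have t3 : Summable fun i =>
      ⟪b i, (((1 - P) * μ * (1 - P)) * ((1 - P) * ν * (1 - P))) (b i)⟫_ℂ := by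
    simp only [hfac₂', mul_assoc B₂ C₂ ((1 - P) * ν * (1 - P))]
    exact (hasSum_diag b B₂ (C₂ * ((1 - P) * ν * (1 - P))) sB₂ sC₂ν).summable
  have t4 : Summable fun i => ⟪b i, (((1 - P) * μ * P) * (P * ν * (1 - P))) (b i)⟫_ℂ :=
    (hasSum_diag b _ _ sμmp sνpm).summable
  have t5 : Summable fun i => ⟪b i, ((P * ν * P) * (P * μ * P)) (b i)⟫_ℂ := by
    simp only [hfac₁', ← mul_assoc (P * ν * P) B₁ C₁]
    exact (hasSum_diag b ((P * ν * P) * B₁) C₁ sνB₁ sC₁).summable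
  have t6 : Summable fun i => ⟪b i, ((P * ν * (1 - P)) * ((1 - P) * μ * P)) (b i)⟫_ℂ :=
    (hasSum_diag b _ _ sνpm sμmp).summable
  have t7 : Summable fun i =>
      ⟪b i, (((1 - P) * ν * (1 - P)) * ((1 - P) * μ * (1 - P))) (b i)⟫_ℂ := by
    simp only [hfac₂', ← mul_assoc ((1 - P) * ν * (1 - P)) B₂ C₂]
    exact (hasSum_diag b (((1 - P) * ν * (1 - P)) * B₂) C₂ sνB₂ sC₂).summable
  have t8 : Summable fun i => ⟪b i, (((1 - P) * ν * P) * (P * μ * (1 - P))) (b i)⟫_ℂ :=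
    (hasSum_diag b _ _ sνmp sμpm).summable
  -- cyclicity for each block pairing
  have eq1 : traceB b ((P * μ * P) * (P * ν * P)) = traceB b ((P * ν * P) * (P * μ * P)) := by
    rw [hfac₁']
    calc traceB b ((B₁ * C₁) * (P * ν * P))
        = traceB b (B₁ * (C₁ * (P * ν * P))) := by rw [mul_assoc]
      _ = traceB b ((C₁ * (P * ν * P)) * B₁) := traceB_comm b _ _ sB₁ sC₁ν
      _ = traceB b (((P * ν * P) * B₁) * C₁) := by
          rw [mul_assoc]
          exact traceB_comm b _ _ sC₁ sνB₁
      _ = traceB b ((P * ν * P) * (B₁ * C₁)) := by rw [mul_assoc]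
  have eq3 : traceB b (((1 - P) * μ * (1 - P)) * ((1 - P) * ν * (1 - P)))
      = traceB b (((1 - P) * ν * (1 - P)) * ((1 - P) * μ * (1 - P))) := by
    rw [hfac₂']
    calc traceB b ((B₂ * C₂) * ((1 - P) * ν * (1 - P)))
        = traceB b (B₂ * (C₂ * ((1 - P) * ν * (1 - P)))) := by rw [mul_assoc]
      _ = traceB b ((C₂ * ((1 - P) * ν * (1 - P))) * B₂) := traceB_comm b _ _ sB₂ sC₂ν
      _ = traceB b ((((1 - P) * ν * (1 - P)) * B₂) * C₂) := by
          rw [mul_assoc]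
          exact traceB_comm b _ _ sC₂ sνB₂
      _ = traceB b (((1 - P) * ν * (1 - P)) * (B₂ * C₂)) := by rw [mul_assoc]
  have eq2 : traceB b ((P * μ * (1 - P)) * ((1 - P) * ν * P))
      = traceB b (((1 - P) * ν * P) * (P * μ * (1 - P))) := traceB_comm b _ _ sμpm sνmp
  have eq4 : traceB b (((1 - P) * μ * P) * (P * ν * (1 - P)))
      = traceB b ((P * ν * (1 - P)) * ((1 - P) * μ * P)) := traceB_comm b _ _ sμmp sνpm
  unfold trRes
  rw [hD1, hD2, hD3, hD4, traceB_add b _ _ t1 t2, traceB_add b _ _ t3 t4,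
    traceB_add b _ _ t5 t6, traceB_add b _ _ t7 t8, eq1, eq2, eq3, eq4]
  ring
end
end

section
/- Let μ be a skew-adjoint bounded operator on H = H₊ ⊕ H₋ with μ₊₊ = P₊μP₊ = 0. Then for every n ≥ 0, the ++ block of the time derivative of μ₊₋μ₋₊ along the Lax flow dμ/dt = −i^{n+1}[P₊, μ^{n+1}] equals i^{n+1}[(μ^{n+1})₊₊, μ₊₊]; in particular, if μ₊₊ = 0 is preserved, then μ₋₊* μ₋₊ is constant, so the modulus |μ₋₊| = √(μ₋₊*μ₋₊) is a constant of motion. -/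
set_option synthInstance.maxHeartbeats 400000
noncomputable section

lemma aux_ring {R : Type*} [Ring R] (P m A : R) (hP : P*P = P) (h0 : P*m*P = 0)
    (hcomm : A*m = m*A) :
    (P*(P*A - A*P)*(1-P))*((1-P)*m*P) + (P*m*(1-P))*((1-P)*(P*A - A*P)*P) = 0 := by
  have h3 : ∀ x : R, P*(P*x) = P*x := fun x => by rw [← mul_assoc, hP]
  have h4 : ∀ x : R, P*(m*(P*x)) = 0 := fun x => by
    rw [← mul_assoc, ← mul_assoc, mul_assoc P m P, ← mul_assoc, h0, zero_mul]
  have h5 : P*(m*P) = 0 := by rw [← mul_assoc, h0]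
  have h6 : ∀ x : R, A*(m*x) = m*(A*x) := fun x => by rw [← mul_assoc, hcomm, mul_assoc]
  simp [mul_sub, sub_mul, mul_assoc, h3, h4, h5, h6, hcomm, hP]

/-- For a differentiable curve of skew-adjoint operators `μ(t)` with `μ₊₊ = 0` satisfying
the Lax flow `dμ/dt = −i^{n+1}[P₊, μ^{n+1}]`, the derivative of `μ₊₋μ₋₊` equals
`i^{n+1}[(μ^{n+1})₊₊, μ₊₊]`; in particular `μ₋₊*μ₋₊` is constant, so the modulus
`|μ₋₊| = √(μ₋₊*μ₋₊)` is a constant of motion. -/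
theorem modulus_const_along_lax_flow {H : Type*} [NormedAddCommGroup H]
    [InnerProductSpace ℂ H] [CompleteSpace H]
    (P : H →L[ℂ] H) (hP_proj : P * P = P) (hP_sa : IsSelfAdjoint P)
    (n : ℕ) (μ : ℝ → H →L[ℂ] H)
    (hskew : ∀ t : ℝ, star (μ t) = -(μ t))
    (hflow : ∀ t : ℝ, HasDerivAt μ
      (-(Complex.I ^ (n + 1)) • (P * (μ t) ^ (n + 1) - (μ t) ^ (n + 1) * P)) t)
    (h0 : ∀ t : ℝ, P * μ t * P = 0) :
    (∀ t : ℝ, HasDerivAt (fun s => (P * μ s * (1 - P)) * ((1 - P) * μ s * P))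
        ((Complex.I ^ (n + 1)) •
          ((P * (μ t) ^ (n + 1) * P) * (P * μ t * P)
            - (P * μ t * P) * (P * (μ t) ^ (n + 1) * P))) t) ∧
    (∀ t : ℝ, star ((1 - P) * μ t * P) * ((1 - P) * μ t * P)
        = star ((1 - P) * μ 0 * P) * ((1 - P) * μ 0 * P)) ∧
    (∀ t : ℝ, CFC.sqrt (star ((1 - P) * μ t * P) * ((1 - P) * μ t * P))
        = CFC.sqrt (star ((1 - P) * μ 0 * P) * ((1 - P) * μ 0 * P))) := by
  set g : ℝ → H →L[ℂ] H := fun s => (P * μ s * (1 - P)) * ((1 - P) * μ s * P) with hg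
  have part1 : ∀ t : ℝ, HasDerivAt g
      ((Complex.I ^ (n + 1)) •
        ((P * (μ t) ^ (n + 1) * P) * (P * μ t * P)
          - (P * μ t * P) * (P * (μ t) ^ (n + 1) * P))) t := by
    intro t
    have hd := hflow t
    have h1 : HasDerivAt (fun s => P * μ s * (1 - P))
        (P * (-(Complex.I ^ (n + 1)) • (P * (μ t) ^ (n + 1) - (μ t) ^ (n + 1) * P)) * (1 - P)) t :=
      (hd.const_mul P).mul_const (1 - P)
    have h2 : HasDerivAt (fun s => (1 - P) * μ s * P)
        ((1 - P) * (-(Complex.I ^ (n + 1)) • (P * (μ t) ^ (n + 1) - (μ t) ^ (n + 1) * P)) * P) t :=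
      (hd.const_mul (1 - P)).mul_const P
    have h3 := h1.mul h2
    refine h3.congr_deriv (Eq.symm ?_)
    set c : ℂ := Complex.I ^ (n + 1)
    set A := (μ t) ^ (n + 1)
    set m := μ t
    have hcomm : A * m = m * A := by
      simp only [A, m, ← pow_succ, ← pow_succ']
    have key := aux_ring P m A hP_proj (h0 t) hcomm
    have hPm : P * m * P = 0 := h0 t
    calc c • ((P * A * P) * (P * m * P) - (P * m * P) * (P * A * P))
        = 0 := by rw [hPm]; simp
      _ = (-c) • ((P*(P*A - A*P)*(1-P))*((1-P)*m*P) + (P*m*(1-P))*((1-P)*(P*A - A*P)*P)) := by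
          rw [key]; simp
      _ = P * (-c • (P * A - A * P)) * (1 - P) * ((1 - P) * m * P)
            + P * m * (1 - P) * ((1 - P) * (-c • (P * A - A * P)) * P) := by
          simp [mul_smul_comm, smul_mul_assoc, smul_add]
  have hg0 : ∀ t : ℝ, HasDerivAt g 0 t := by
    intro t
    have := part1 t
    rwa [h0 t, mul_zero, zero_mul, sub_zero, smul_zero] at this
  have hconst : ∀ t : ℝ, g t = g 0 := by
    intro t
    have hdiff : Differentiable ℝ g := fun x => (hg0 x).differentiableAt
    have hderiv : ∀ x, deriv g x = 0 := fun x => (hg0 x).deriv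
    exact is_const_of_deriv_eq_zero hdiff hderiv t 0
  have hstar : ∀ t : ℝ, star ((1 - P) * μ t * P) * ((1 - P) * μ t * P) = -(g t) := by
    intro t
    have hs : star ((1 - P) * μ t * P) = -(P * μ t * (1 - P)) := by
      rw [star_mul, star_mul, hskew t, hP_sa.star_eq]
      have : star (1 - P : H →L[ℂ] H) = 1 - P := by
        simp [star_sub, hP_sa.star_eq]
      rw [this]
      simp [mul_assoc]
    rw [hs, hg]
    simp [mul_assoc]
  have part2 : ∀ t : ℝ, star ((1 - P) * μ t * P) * ((1 - P) * μ t * P)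
      = star ((1 - P) * μ 0 * P) * ((1 - P) * μ 0 * P) := by
    intro t; rw [hstar t, hstar 0, hconst t]
  exact ⟨part1, part2, fun t => by rw [part2 t]⟩
end
end

section
/- Let μ be a bounded operator with P₊μP₊ = 0, and let H^n_k(μ) be the sum over tuples (i₀,…,iₙ) ∈ {0,1}^{n+1} with Σiⱼ = k of P₊^{i₀}μP₊^{i₁}⋯μP₊^{iₙ}. If k > n/2 + 1, then P₋ μ H^{n−1}_{k−1}(μ) P₋ = 0. -/
noncomputable section

/-- Auxiliary: if two adjacent entries of a list multiply to zero, the product is zero. -/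
lemma list_prod_eq_zero_of_adj {M : Type*} [MonoidWithZero M] :
    ∀ (L : List M) (i : ℕ) (h : i + 1 < L.length), L[i] * L[i + 1] = 0 → L.prod = 0
  | a :: b :: L, 0, _, hz => by
      simp only [List.prod_cons]
      rw [← mul_assoc]
      simp only [List.getElem_cons_zero, List.getElem_cons_succ] at hz
      rw [hz, zero_mul]
  | a :: L, i + 1, h, hz => by
      simp only [List.prod_cons]
      have h' : i + 1 < L.length := by simpa using h
      have hz' : L[i] * L[i + 1] = 0 := by simpa using hz
      rw [list_prod_eq_zero_of_adj L i h' hz', mul_zero]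

/-- `HpolyOp P μ n k` is the homogeneous polynomial `H^n_k(μ)`: the sum over all tuples
`(i₀,…,iₙ) ∈ {0,1}^{n+1}` with `i₀+⋯+iₙ = k` of `P^{i₀} μ P^{i₁} μ ⋯ μ P^{iₙ}`.
By convention it vanishes for `k < 0` or `k > n+1`. -/
def HpolyOp {H : Type*} [NormedAddCommGroup H] [InnerProductSpace ℂ H]
    (P μ : H →L[ℂ] H) (n : ℕ) (k : ℤ) : H →L[ℂ] H :=
  ∑ f ∈ Finset.univ.filter
      (fun f : Fin (n + 1) → Bool =>
        ((Finset.univ.filter fun j => f j = true).card : ℤ) = k),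
    (List.ofFn fun j : Fin (n + 1) =>
      (if f j then P else 1) * (if (j : ℕ) < n then μ else 1)).prod

/-- If `P₊μP₊ = 0` and `k > n/2 + 1`, then `P₋ μ H^{n−1}_{k−1}(μ) P₋ = 0`. -/
theorem Hpoly_block_vanishes {H : Type*} [NormedAddCommGroup H] [InnerProductSpace ℂ H]
    (P μ : H →L[ℂ] H) (hP_proj : P * P = P)
    (h0 : P * μ * P = 0) (n k : ℕ) (hn : 1 ≤ n) (hk : 2 * k > n + 2) :
    (1 - P) * (μ * HpolyOp P μ (n - 1) ((k : ℤ) - 1)) * (1 - P) = 0 := by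
  obtain ⟨m, rfl⟩ : ∃ m, n = m + 1 := ⟨n - 1, by omega⟩
  have hm : m + 1 - 1 = m := by omega
  rw [hm, HpolyOp, Finset.mul_sum, Finset.mul_sum, Finset.sum_mul]
  apply Finset.sum_eq_zero
  intro f hf
  rw [Finset.mem_filter] at hf
  set g : Fin (m + 1) → (H →L[ℂ] H) :=
    fun j => (if f j then P else 1) * (if (j : ℕ) < m then μ else 1) with hg
  have hP1 : P * (1 - P) = 0 := by rw [mul_sub, mul_one, hP_proj, sub_self]
  by_cases hlast : f (Fin.last m) = true
  · -- word ends in P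
    have hlastg : g (Fin.last m) = P := by
      simp [hg, hlast, Fin.val_last]
    rw [List.ofFn_succ', List.concat_eq_append, List.prod_append, List.prod_cons,
      List.prod_nil, mul_one, hlastg]
    simp only [mul_assoc, hP1, mul_zero]
  · by_cases hadj : ∃ j : Fin m, f j.castSucc = true ∧ f j.succ = true
    · -- two adjacent P's: the word itself vanishes
      obtain ⟨j, hj1, hj2⟩ := hadj
      have hlen : (j : ℕ) + 1 < (List.ofFn g).length := by
        simp only [List.length_ofFn]; omega
      have hjm : (j : ℕ) < m := j.isLt
      have e1 : (List.ofFn g)[(j : ℕ)] = P * μ := by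
        rw [List.getElem_ofFn]
        have : (⟨(j : ℕ), by omega⟩ : Fin (m + 1)) = j.castSucc := by
          ext; simp
        rw [this]
        simp [hg, hj1, Fin.coe_castSucc, hjm]
      have e2 : (List.ofFn g)[(j : ℕ) + 1] =
          P * (if ((j : ℕ) + 1) < m then μ else 1) := by
        rw [List.getElem_ofFn]
        have : (⟨(j : ℕ) + 1, by omega⟩ : Fin (m + 1)) = j.succ := by
          ext; simp
        rw [this]
        simp [hg, hj2]
      have hz : (List.ofFn g)[(j : ℕ)] * (List.ofFn g)[(j : ℕ) + 1] = 0 := by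
        rw [e1, e2, ← mul_assoc, h0, zero_mul]
      rw [list_prod_eq_zero_of_adj (List.ofFn g) (j : ℕ) hlen hz]
      simp
    · -- impossible by counting
      exfalso
      push_neg at hadj
      set T := Finset.univ.filter (fun j : Fin (m + 1) => f j = true) with hT
      have hcard : (T.card : ℤ) = (k : ℤ) - 1 := hf.2
      have hcard' : T.card = k - 1 := by omega
      have hbound : T.card ≤ (Finset.range ((m + 1) / 2)).card := by
        apply Finset.card_le_card_of_injOn (fun j : Fin (m + 1) => (j : ℕ) / 2)
        · intro j hj
          rw [hT, Finset.mem_coe, Finset.mem_filter] at hj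
          have hjm : (j : ℕ) < m := by
            rcases lt_or_eq_of_le (Nat.lt_succ_iff.mp j.isLt) with h | h
            · exact h
            · exfalso; apply hlast
              have : j = Fin.last m := by ext; simpa using h
              rw [← this]; exact hj.2
          rw [Finset.mem_coe, Finset.mem_range]
          show (j : ℕ) / 2 < (m + 1) / 2
          omega
        · intro j hj j' hj' hdiv
          have hjf : f j = true := by
            have := hj; rw [hT] at this
            simpa using this
          have hj'f : f j' = true := by
            have := hj'; rw [hT] at this
            simpa using this
          by_contra hne
          have hne' : (j : ℕ) ≠ (j' : ℕ) := fun h => hne (Fin.ext h)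
          have hc : (j : ℕ) + 1 = (j' : ℕ) ∨ (j' : ℕ) + 1 = (j : ℕ) := by
            simp only at hdiv
            omega
          rcases hc with hc | hc
          · have hjm : (j : ℕ) < m := by have := j'.isLt; omega
            apply hadj ⟨(j : ℕ), hjm⟩
            · have : (⟨(j : ℕ), hjm⟩ : Fin m).castSucc = j := by ext; simp
              rw [this]; exact hjf
            · have : (⟨(j : ℕ), hjm⟩ : Fin m).succ = j' := by ext; simp [hc]
              rw [this]; exact hj'f
          · have hjm : (j' : ℕ) < m := by have := j.isLt; omega
            apply hadj ⟨(j' : ℕ), hjm⟩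
            · have : (⟨(j' : ℕ), hjm⟩ : Fin m).castSucc = j' := by ext; simp
              rw [this]; exact hj'f
            · have : (⟨(j' : ℕ), hjm⟩ : Fin m).succ = j := by ext; simp [hc]
              rw [this]; exact hjf
      rw [Finset.card_range] at hbound
      omega
end
end

section
/- Let μ be a bounded operator with P₊μP₊ = 0. Then P₊[μ², H^n_k(μ)]P₊ = 0 for all n, k, where H^n_k(μ) is the sum over tuples (i₀,…,iₙ) ∈ {0,1}^{n+1} with Σiⱼ = k of P₊^{i₀}μP₊^{i₁}⋯μP₊^{iₙ}. -/
noncomputable section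

section Aux

variable {H : Type*} [NormedAddCommGroup H] [InnerProductSpace ℂ H]

/-- `H^n_k = 0` for `k < 0`. -/
lemma Hpoly_neg (P μ : H →L[ℂ] H) (n : ℕ) (k : ℤ) (hk : k < 0) :
    HpolyOp P μ n k = 0 := by
  unfold HpolyOp
  rw [Finset.filter_false_of_mem, Finset.sum_empty]
  intro f _ hf
  omega

/-- Left one-step recurrence: `H^{n+1}_k = PμH^n_{k-1} + μH^n_k`. -/
lemma Hpoly_recL (P μ : H →L[ℂ] H) (n : ℕ) (k : ℤ) :
    HpolyOp P μ (n + 1) k =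
      P * μ * HpolyOp P μ n (k - 1) + μ * HpolyOp P μ n k := by
  have hcard : ∀ (a : Bool) (g : Fin (n + 1) → Bool),
      (Finset.filter (fun j : Fin (n + 2) =>
          Fin.cons (α := fun _ : Fin (n + 2) => Bool) a g j = true) Finset.univ).card
        = (if a then 1 else 0) +
          (Finset.filter (fun j : Fin (n + 1) => g j = true) Finset.univ).card := by
    intro a g
    rw [Finset.card_filter, Finset.card_filter, Fin.sum_univ_succ]
    simp
  have hprod : ∀ (a : Bool) (g : Fin (n + 1) → Bool),
      (List.ofFn fun j : Fin (n + 2) =>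
          (if Fin.cons (α := fun _ : Fin (n + 2) => Bool) a g j = true then P else 1) *
            (if (j : ℕ) < n + 1 then μ else 1)).prod
        = ((if a then P else 1) * μ) *
          (List.ofFn fun j : Fin (n + 1) =>
            (if g j = true then P else 1) * (if (j : ℕ) < n then μ else 1)).prod := by
    intro a g
    rw [List.ofFn_succ, List.prod_cons]
    congr 1
    · simp
  unfold HpolyOp
  rw [Finset.sum_filter, Finset.sum_filter, Finset.sum_filter]
  rw [← (Fin.consEquiv (fun _ : Fin (n + 2) => Bool)).sum_comp]
  rw [Fintype.sum_prod_type, Fintype.sum_bool]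
  have e_apply : ∀ (a : Bool) (g : Fin (n + 1) → Bool),
      (Fin.consEquiv (fun _ : Fin (n + 2) => Bool)) (a, g)
        = Fin.cons (α := fun _ : Fin (n + 2) => Bool) a g := fun _ _ => rfl
  simp only [e_apply]
  simp only [hprod]
  simp only [hcard]
  simp only [show (false = true) = False by simp, show (true = true) = True by simp,
    if_true, if_false]
  rw [Finset.mul_sum, Finset.mul_sum]
  congr 1
  · apply Finset.sum_congr rfl
    intro g _
    rw [mul_ite, mul_zero]
    apply if_congr _ rfl rfl
    omega
  · apply Finset.sum_congr rfl
    intro g _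
    rw [mul_ite, mul_zero, one_mul]
    apply if_congr _ rfl rfl
    omega

/-- Explicit value at `n = 0`. -/
lemma Hpoly_zero_n (P μ : H →L[ℂ] H) (k : ℤ) :
    HpolyOp P μ 0 k = (if k = 0 then 1 else 0) + (if k = 1 then P else 0) := by
  unfold HpolyOp
  rw [Finset.sum_filter]
  rw [← (Equiv.funUnique (Fin 1) Bool).symm.sum_comp]
  rw [Fintype.sum_bool]
  norm_num [Equiv.funUnique, List.ofFn_succ]
  split_ifs <;> first | omega | simp

/-- Right one-step recurrence: `H^{n+1}_k = H^n_{k-1}μP + H^n_kμ`. -/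
lemma Hpoly_recR (P μ : H →L[ℂ] H) (n : ℕ) (k : ℤ) :
    HpolyOp P μ (n + 1) k =
      HpolyOp P μ n (k - 1) * (μ * P) + HpolyOp P μ n k * μ := by
  induction n generalizing k with
  | zero =>
    rw [Hpoly_recL]
    simp only [Hpoly_zero_n]
    split_ifs <;> first | omega | noncomm_ring
  | succ n ih =>
    rw [Hpoly_recL]
    conv_lhs => rw [ih, ih]
    conv_rhs => rw [Hpoly_recL P μ n (k - 1), Hpoly_recL P μ n k]
    noncomm_ring

/-- The key step: the sandwiched commutator at `k` is the negative of the one at `k - 1`. -/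
lemma Hpoly_step (P μ : H →L[ℂ] H) (hP : P * P = P) (h0 : P * μ * P = 0) (n : ℕ) (k : ℤ) :
    P * (μ ^ 2 * HpolyOp P μ n k - HpolyOp P μ n k * μ ^ 2) * P
      = -(P * (μ ^ 2 * HpolyOp P μ n (k - 1) - HpolyOp P μ n (k - 1) * μ ^ 2) * P) := by
  have E1 : HpolyOp P μ (n + 1 + 1) k
      = P * μ * (P * μ * HpolyOp P μ n (k - 1 - 1) + μ * HpolyOp P μ n (k - 1))
        + μ * (P * μ * HpolyOp P μ n (k - 1) + μ * HpolyOp P μ n k) := by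
    rw [Hpoly_recL, Hpoly_recL P μ n (k - 1), Hpoly_recL P μ n k]
  have E2 : HpolyOp P μ (n + 1 + 1) k
      = (HpolyOp P μ n (k - 1 - 1) * (μ * P) + HpolyOp P μ n (k - 1) * μ) * (μ * P)
        + (HpolyOp P μ n (k - 1) * (μ * P) + HpolyOp P μ n k * μ) * μ := by
    rw [Hpoly_recR, Hpoly_recR P μ n (k - 1), Hpoly_recR P μ n k]
  have key := congrArg (fun X => P * X * P) (E1.symm.trans E2)
  have hPP : ∀ X : H →L[ℂ] H, P * (P * X) = P * X := fun X => by rw [← mul_assoc, hP]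
  have hz1 : ∀ X : H →L[ℂ] H, P * (μ * (P * X)) = 0 := fun X => by
    rw [← mul_assoc, ← mul_assoc, h0, zero_mul]
  have hz2 : P * (μ * P) = 0 := by rw [← mul_assoc, h0]
  simp only [mul_add, add_mul, mul_assoc, hPP, hz1, hz2, hP, mul_zero, zero_mul, add_zero,
    zero_add, mul_one, one_mul] at key
  simp only [pow_two, mul_sub, sub_mul, mul_assoc]
  rw [neg_sub, sub_eq_sub_iff_add_eq_add]
  rw [add_comm] at key
  exact key

end Aux

/-- If `P₊μP₊ = 0`, then `P₊ [μ², H^n_k(μ)] P₊ = 0` for all `n`, `k`. -/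
theorem Hpoly_commutator_block_vanishes {H : Type*} [NormedAddCommGroup H]
    [InnerProductSpace ℂ H]
    (P μ : H →L[ℂ] H) (hP_proj : P * P = P)
    (h0 : P * μ * P = 0) (n : ℕ) (k : ℤ) :
    P * (μ ^ 2 * HpolyOp P μ n k - HpolyOp P μ n k * μ ^ 2) * P = 0 := by
  induction k using Int.induction_on with
  | zero =>
    have h := Hpoly_step P μ hP_proj h0 n 0
    rw [show (0 : ℤ) - 1 = -1 by ring, Hpoly_neg P μ n (-1) (by norm_num)] at h
    simpa using h
  | succ i hi =>
    have h := Hpoly_step P μ hP_proj h0 n (i + 1)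
    rw [show ((i : ℤ) + 1) - 1 = i by ring, hi] at h
    simpa using h
  | pred i _ =>
    rw [Hpoly_neg P μ n (-(i : ℤ) - 1) (by omega)]
    simp
end
end

section
/- Let B be a positive trace-class operator on H₊ and u : H₊ → H₋ a partial isometry with initial space equal to the closure of the range of B. Let D be a skew-adjoint trace-class operator on H₋. For the operator μ with blocks μ₊₊ = 0, μ₋₊ = uB, μ₊₋ = −Bu*, μ₋₋ = D, and any differentiable flow t ↦ μ(t) satisfying d(uB)/dt = i^{n+1}(μ^n)₋₋ uB with B and D constant, the partial isometry u satisfies du/dt = i^{n+1}(μ^n)₋₋ u. -/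
noncomputable section

/-- Let `B` be a positive trace-class operator supported on `H₊`, `D` a skew-adjoint
trace-class operator supported on `H₋`, and `u(t)` a differentiable curve of partial
isometries from `H₊` to `H₋` with initial space `closure(im B)`.  For the operator `μ`
with blocks `μ₊₊ = 0`, `μ₋₊ = uB`, `μ₊₋ = −Bu*`, `μ₋₋ = D`, if
`d(uB)/dt = i^{n+1}(μ^n)₋₋ uB`, then `du/dt = i^{n+1}(μ^n)₋₋ u`. -/
theorem partial_isometry_flow {H : Type*} [NormedAddCommGroup H] [InnerProductSpace ℂ H]
    [CompleteSpace H]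
    (P B D : H →L[ℂ] H) (hP_proj : P * P = P) (hP_sa : IsSelfAdjoint P)
    (hB_supp : P * B * P = B) (hB_pos : B.IsPositive) (hB_tc : IsTraceClass B)
    (hD_supp : (1 - P) * D * (1 - P) = D) (hD_skew : star D = -D) (hD_tc : IsTraceClass D)
    (n : ℕ) (u : ℝ → H →L[ℂ] H)
    (hu_supp : ∀ t : ℝ, (1 - P) * u t * P = u t)
    (hu_pi : ∀ t : ℝ, u t * star (u t) * u t = u t)
    (hu_init : ∀ t : ℝ, (LinearMap.ker (u t : H →ₗ[ℂ] H))ᗮ = (LinearMap.range (B : H →ₗ[ℂ] H)).topologicalClosure)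
    (hu_diff : Differentiable ℝ u)
    (μ : ℝ → H →L[ℂ] H)
    (hμ : ∀ t : ℝ, μ t = u t * B - B * star (u t) + D)
    (hflow : ∀ t : ℝ, HasDerivAt (fun s => u s * B)
      ((Complex.I ^ (n + 1)) • ((1 - P) * (μ t) ^ n * (1 - P) * (u t * B))) t) :
    ∀ t : ℝ, HasDerivAt u
      ((Complex.I ^ (n + 1)) • ((1 - P) * (μ t) ^ n * (1 - P) * u t)) t := by
  intro t
  set S : Submodule ℂ H := (LinearMap.range (B : H →ₗ[ℂ] H)).topologicalClosure with hS
  set c : ℂ := Complex.I ^ (n + 1) with hc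
  set M : H →L[ℂ] H := (1 - P) * (μ t) ^ n * (1 - P) with hM
  have hdiff : HasDerivAt u (deriv u t) t := (hu_diff t).hasDerivAt
  -- derivative of s ↦ u s * B
  have h1 : HasDerivAt (fun s => u s * B) (deriv u t * B) t := hdiff.mul_const B
  have heq : deriv u t * B = c • (M * (u t * B)) := h1.unique (hflow t)
  set X : H →L[ℂ] H := deriv u t - c • (M * u t) with hX
  have hXB : X * B = 0 := by
    rw [hX, sub_mul, smul_mul_assoc, mul_assoc, heq, sub_self]
  -- kernel of u s is constantly Sᗮ
  have hker : ∀ s : ℝ, LinearMap.ker (u s : H →ₗ[ℂ] H) = Sᗮ := by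
    intro s
    haveI : CompleteSpace (LinearMap.ker (u s : H →ₗ[ℂ] H)) :=
      (ContinuousLinearMap.isClosed_ker (u s)).completeSpace_coe
    rw [← Submodule.orthogonal_orthogonal (LinearMap.ker (u s : H →ₗ[ℂ] H)), hu_init s]
  -- X vanishes on S
  have hXS : ∀ x ∈ S, X x = 0 := by
    intro x hx
    have hle : LinearMap.range (B : H →ₗ[ℂ] H) ≤ LinearMap.ker (X : H →ₗ[ℂ] H) := by
      rintro _ ⟨y, rfl⟩
      have : (X * B) y = 0 := by rw [hXB]; rfl
      exact this
    have := (LinearMap.range (B : H →ₗ[ℂ] H)).topologicalClosure_minimal hle (ContinuousLinearMap.isClosed_ker X)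
    exact this hx
  -- X vanishes on Sᗮ
  have hXSo : ∀ x ∈ Sᗮ, X x = 0 := by
    intro x hx
    have hux : ∀ s : ℝ, u s x = 0 := by
      intro s
      have : x ∈ LinearMap.ker (u s : H →ₗ[ℂ] H) := by rw [hker s]; exact hx
      exact this
    have hder : HasDerivAt (fun s => u s x) (deriv u t x) t := by
      have := ((ContinuousLinearMap.apply ℂ H x).restrictScalars ℝ).hasFDerivAt.comp_hasDerivAt
        t hdiff
      exact this
    have hder0 : HasDerivAt (fun s => u s x) 0 t := by
      have : (fun s : ℝ => u s x) = fun _ => (0 : H) := funext hux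
      rw [this]; exact hasDerivAt_const t 0
    have h0 : deriv u t x = 0 := hder.unique hder0
    have hM0 : (M * u t) x = 0 := by
      show M (u t x) = 0
      rw [hux t, map_zero]
    rw [hX]
    show deriv u t x - (c • (M * u t)) x = 0
    rw [h0, ContinuousLinearMap.smul_apply, hM0, smul_zero, sub_zero]
  -- therefore X = 0
  have hX0 : X = 0 := by
    ext x
    haveI : CompleteSpace S := (LinearMap.range (B : H →ₗ[ℂ] H)).isClosed_topologicalClosure.completeSpace_coe
    obtain ⟨y, hy, z, hz, rfl⟩ := Submodule.exists_add_mem_mem_orthogonal (K := S) x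
    simp [map_add, hXS y hy, hXSo z hz]
  have hderiv : deriv u t = c • (M * u t) := by
    have := sub_eq_zero.mp hX0
    exact this
  have : HasDerivAt u (c • (M * u t)) t := hderiv ▸ hdiff
  simpa [hM, mul_assoc] using this
end
end
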